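/- Let n ≥ 1, let (P_k)_{k≥0} be a harmonic sequence of polynomials satisfying the symmetry condition P_k(t) = (−1)^k·P_k(a+b−t) for all t ∈ [a,b] and all k, and let f be n-times differentiable on an open interval containing [a,b] with f^(n) absolutely continuous on [a,b]. Then for every x ∈ [a,(a+b)/2], (1/n)·( (f(x)+f(a+b−x))/2 + Σ_{k=1}^{n−1} ( ((−1)^k/2)·P_k(x)·( f^{(k)}(x) + (−1)^k·f^{(k)}(a+b−x) ) + F̃_k(a,b) ) ) − (1/(b−a))·∫_a^b f(y) dy = ((−1)^{n−1}/((b−a)·n))·∫_a^b P_{n−1}(t)·S(t,x)·f^(n)(t) dt. -/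

import Mathlib

open MeasureTheory Set
open scoped Interval

/-- The Guessab–Schmeisser / Fink-type kernel `S(t,x)` on `[a,b]`. -/
noncomputable def Skernel (a b x t : ℝ) : ℝ :=
  if t ≤ x then t - a else if t < a + b - x then t - (a + b) / 2 else t - b

/-- `g` is absolutely continuous on `[a,b]`. -/
def AbsCont (g : ℝ → ℝ) (a b : ℝ) : Prop :=
  ∃ h : ℝ → ℝ, IntervalIntegrable h MeasureTheory.volume a b ∧
    ∀ t ∈ Set.Icc a b, g t = g a + ∫ s in a..t, h s

/-- A harmonic sequence of polynomials: `P 0 = 1` and `(P (k+1))' = P k`. -/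
def HarmonicSeq (P : ℕ → Polynomial ℝ) : Prop :=
  P 0 = 1 ∧ ∀ k, (P (k + 1)).derivative = P k

/-- The term `T_k(x)` of the harmonic-sequence expansion. -/
noncomputable def Tterm (P : ℕ → Polynomial ℝ) (f : ℝ → ℝ) (a b x : ℝ) (k : ℕ) : ℝ :=
  ((-1 : ℝ) ^ k / 2) *
    ((P k).eval x * iteratedDeriv k f x +
      (P k).eval (a + b - x) * iteratedDeriv k f (a + b - x))

/-- The term `F̃_k(a,b)` of the harmonic-sequence expansion. -/
noncomputable def Ftilde (P : ℕ → Polynomial ℝ) (f : ℝ → ℝ) (n : ℕ) (a b : ℝ) (k : ℕ) : ℝ :=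
  ((-1 : ℝ) ^ k * ((n : ℝ) - k) / (b - a)) *
    ((P k).eval a * iteratedDeriv (k - 1) f a - (P k).eval b * iteratedDeriv (k - 1) f b)

section Helpers

open Polynomial

lemma myIterWithin {f : ℝ → ℝ} {s : Set ℝ} (hs : IsOpen s) {x : ℝ} (hx : x ∈ s) (m : ℕ) :
    iteratedDerivWithin m f s x = iteratedDeriv m f x := by
  simp [iteratedDerivWithin_eq_iteratedFDerivWithin, iteratedDeriv_eq_iteratedFDeriv,
    iteratedFDerivWithin_of_isOpen m hs hx]

lemma myCont {n : ℕ} {f : ℝ → ℝ} {c d : ℝ} (hf : ContDiffOn ℝ (n : ℕ∞) f (Set.Ioo c d))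
    {m : ℕ} (hm : m ≤ n) : ContinuousOn (iteratedDeriv m f) (Set.Ioo c d) := by
  have h := hf.continuousOn_iteratedDerivWithin (m := m) (by exact_mod_cast hm)
    (isOpen_Ioo.uniqueDiffOn)
  exact h.congr fun y hy => (myIterWithin isOpen_Ioo hy m).symm

lemma myDeriv {n : ℕ} {f : ℝ → ℝ} {c d : ℝ} (hf : ContDiffOn ℝ (n : ℕ∞) f (Set.Ioo c d))
    {m : ℕ} (hm : m < n) {t : ℝ} (ht : t ∈ Set.Ioo c d) :
    HasDerivAt (iteratedDeriv m f) (iteratedDeriv (m + 1) f t) t := by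
  have h := hf.differentiableOn_iteratedDerivWithin (m := m) (by exact_mod_cast hm)
    (isOpen_Ioo.uniqueDiffOn)
  have h2 : DifferentiableAt ℝ (iteratedDerivWithin m f (Set.Ioo c d)) t :=
    (h t ht).differentiableAt (isOpen_Ioo.mem_nhds ht)
  have heq : iteratedDeriv m f =ᶠ[nhds t] iteratedDerivWithin m f (Set.Ioo c d) := by
    filter_upwards [isOpen_Ioo.mem_nhds ht] with y hy
    exact (myIterWithin isOpen_Ioo hy m).symm
  have h3 : DifferentiableAt ℝ (iteratedDeriv m f) t := h2.congr_of_eventuallyEq heq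
  have := h3.hasDerivAt
  rw [iteratedDeriv_succ]; exact this

lemma myPolyIter {P : ℕ → Polynomial ℝ} (hP : HarmonicSeq P) (c : ℝ) :
    ∀ j k : ℕ, j ≤ k →
      derivative^[j] (P k * (X - C c)) = P (k - j) * (X - C c) + C (j : ℝ) * P (k + 1 - j) := by
  intro j
  induction j with
  | zero => intro k _; simp
  | succ j ih =>
    intro k hk
    rw [Function.iterate_succ_apply', ih k (Nat.le_of_succ_le hk)]
    obtain ⟨m, hm⟩ : ∃ m, k - j = m + 1 := ⟨k - j - 1, by omega⟩
    have hkj : k + 1 - j = (k - j) + 1 := by omega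
    rw [hm, hkj, hm]
    rw [derivative_add, derivative_mul, derivative_mul, hP.2, hP.2]
    have h1 : derivative (X - C c) = 1 := by simp
    have h2 : derivative (C (j:ℝ)) = 0 := derivative_C
    rw [h1, h2]
    have e1 : k - (j + 1) = m := by omega
    have e2 : k + 1 - (j + 1) = m + 1 := by omega
    rw [e1, e2]
    push_cast [C_add, C_1]
    ring

lemma myPolyTop {P : ℕ → Polynomial ℝ} (hP : HarmonicSeq P) (c : ℝ) (k : ℕ) :
    derivative^[k + 1] (P k * (X - C c)) = C ((k : ℝ) + 1) := by
  rw [Function.iterate_succ_apply', myPolyIter hP c k k le_rfl]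
  simp only [Nat.sub_self, hP.1]
  have : k + 1 - k = 1 := by omega
  rw [this]
  rw [derivative_add, derivative_mul, derivative_mul]
  have h1 : derivative (X - C c) = 1 := by simp
  rw [h1, derivative_C, derivative_one]
  have h2 : derivative (P 1) = P 0 := hP.2 0
  rw [h2, hP.1]
  push_cast [C_add, C_1]
  ring

lemma myIBP {n : ℕ} {f : ℝ → ℝ} {c d : ℝ} (hf : ContDiffOn ℝ (n : ℕ∞) f (Set.Ioo c d))
    {u v : ℝ} (huv : Set.uIcc u v ⊆ Set.Ioo c d) :
    ∀ m : ℕ, m ≤ n → ∀ Q : Polynomial ℝ,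
    ∫ t in u..v, Q.eval t * iteratedDeriv m f t
      = (∑ j ∈ Finset.range m, (-1:ℝ)^j *
          ((derivative^[j] Q).eval v * iteratedDeriv (m - (j+1)) f v
            - (derivative^[j] Q).eval u * iteratedDeriv (m - (j+1)) f u))
        + (-1:ℝ)^m * ∫ t in u..v, (derivative^[m] Q).eval t * f t := by
  intro m
  induction m with
  | zero => intro _ Q; simp [iteratedDeriv_zero]
  | succ m ih =>
    intro hm Q
    have hm' : m ≤ n := Nat.le_of_succ_le hm
    have h1 : ∫ t in u..v, Q.eval t * iteratedDeriv (m+1) f t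
        = Q.eval v * iteratedDeriv m f v - Q.eval u * iteratedDeriv m f u
          - ∫ t in u..v, Q.derivative.eval t * iteratedDeriv m f t := by
      apply intervalIntegral.integral_mul_deriv_eq_deriv_mul
        (fun y _ => Q.hasDerivAt y)
        (fun y hy => myDeriv hf (by omega) (huv hy))
      · exact (Q.derivative.continuous_aeval.continuousOn).intervalIntegrable
      · exact ((myCont hf hm).mono huv).intervalIntegrable
    rw [h1, ih hm' Q.derivative]
    simp only [← Function.iterate_succ_apply]
    rw [Finset.sum_range_succ']
    have hs : ∑ j ∈ Finset.range m, (-1:ℝ)^(j+1) *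
          ((derivative^[j+1] Q).eval v * iteratedDeriv (m + 1 - (j+1+1)) f v
            - (derivative^[j+1] Q).eval u * iteratedDeriv (m + 1 - (j+1+1)) f u)
        = - ∑ j ∈ Finset.range m, (-1:ℝ)^j *
          ((derivative^[j+1] Q).eval v * iteratedDeriv (m - (j+1)) f v
            - (derivative^[j+1] Q).eval u * iteratedDeriv (m - (j+1)) f u) := by
      rw [← Finset.sum_neg_distrib]
      apply Finset.sum_congr rfl
      intro j hj
      have : m + 1 - (j+1+1) = m - (j+1) := by omega
      rw [this]; ring
    rw [hs]
    simp only [pow_zero, one_mul, Function.iterate_zero_apply, Nat.add_sub_cancel]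
    ring

lemma myPiece {n : ℕ} (hn : 1 ≤ n) {P : ℕ → Polynomial ℝ} (hP : HarmonicSeq P)
    {f : ℝ → ℝ} {c d : ℝ} (hf : ContDiffOn ℝ (n : ℕ∞) f (Set.Ioo c d))
    {u v : ℝ} (huv : Set.uIcc u v ⊆ Set.Ioo c d) (c₀ : ℝ) :
    ∫ t in u..v, (P (n-1)).eval t * (t - c₀) * iteratedDeriv n f t
    = (∑ j ∈ Finset.range n, (-1:ℝ)^j *
        (((P (n-1-j)).eval v * (v - c₀) + (j:ℝ) * (P (n-j)).eval v) * iteratedDeriv (n-(j+1)) f v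
          - ((P (n-1-j)).eval u * (u - c₀) + (j:ℝ) * (P (n-j)).eval u) * iteratedDeriv (n-(j+1)) f u))
      + (-1:ℝ)^n * ((n:ℝ) * ∫ t in u..v, f t) := by
  have h := myIBP hf huv n le_rfl (P (n-1) * (X - C c₀))
  simp only [eval_mul, eval_sub, eval_X, eval_C] at h
  rw [h]
  congr 1
  · apply Finset.sum_congr rfl
    intro j hj
    have hj' : j ≤ n - 1 := by
      have := Finset.mem_range.mp hj; omega
    rw [myPolyIter hP c₀ j (n-1) hj']
    have e1 : n - 1 + 1 - j = n - j := by omega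
    rw [e1]
    simp only [eval_add, eval_mul, eval_sub, eval_X, eval_C]
  · have e2 : n = (n-1) + 1 := by omega
    rw [show derivative^[n] (P (n-1) * (X - C c₀)) = C ((((n-1:ℕ)):ℝ) + 1) by
      conv_lhs => rw [e2]
      exact myPolyTop hP c₀ (n-1)]
    have e3 : (((n-1:ℕ)):ℝ) + 1 = (n:ℝ) := by
      have : ((n-1:ℕ):ℝ) = (n:ℝ) - 1 := by
        push_cast [Nat.cast_sub hn]; ring
      rw [this]; ring
    rw [e3, ← intervalIntegral.integral_const_mul]
    simp [eval_C]

lemma myIntegrableCongr {g h : ℝ → ℝ} {u v : ℝ} (hg : IntervalIntegrable g volume u v)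
    (he : ∀ᵐ t ∂(volume : Measure ℝ), t ∈ Ι u v → g t = h t) :
    IntervalIntegrable h volume u v := by
  rw [intervalIntegrable_iff] at *
  apply hg.congr
  have h1 : ∀ᵐ t ∂((volume : Measure ℝ).restrict (Ι u v)), t ∈ Ι u v :=
    ae_restrict_mem measurableSet_uIoc
  filter_upwards [ae_restrict_of_ae he, h1] with t h2 h3 using (h2 h3)

end Helpers

theorem stmt_13 (n : ℕ) (hn : 1 ≤ n) (P : ℕ → Polynomial ℝ) (hP : HarmonicSeq P)
    (a b c d : ℝ) (hab : a < b) (hca : c < a) (hbd : b < d)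
    (hsym : ∀ k, ∀ t ∈ Set.Icc a b, (P k).eval t = (-1 : ℝ) ^ k * (P k).eval (a + b - t))
    (f : ℝ → ℝ)
    (hf : ContDiffOn ℝ (n : ℕ∞) f (Set.Ioo c d))
    (hAC : AbsCont (iteratedDeriv n f) a b)
    (x : ℝ) (hx : x ∈ Set.Icc a ((a + b) / 2)) :
    (1 / (n : ℝ)) *
        ((f x + f (a + b - x)) / 2 +
          ∑ k ∈ Finset.Icc 1 (n - 1),
            (((-1 : ℝ) ^ k / 2) * (P k).eval x *
                (iteratedDeriv k f x + (-1 : ℝ) ^ k * iteratedDeriv k f (a + b - x))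
              + Ftilde P f n a b k))
      - (1 / (b - a)) * ∫ y in a..b, f y
    = ((-1 : ℝ) ^ (n - 1) / ((b - a) * n)) *
        ∫ t in a..b, (P (n - 1)).eval t * Skernel a b x t * iteratedDeriv n f t := by
  -- order facts
  have hax : a ≤ x := hx.1
  have hxm : x ≤ (a + b) / 2 := hx.2
  have hxx' : x ≤ a + b - x := by linarith
  have hx'b : a + b - x ≤ b := by linarith
  have hxb : x ≤ b := by linarith
  have hax' : a ≤ a + b - x := by linarith
  have hIccIoo : Set.Icc a b ⊆ Set.Ioo c d := fun t ht =>
    ⟨lt_of_lt_of_le hca ht.1, lt_of_le_of_lt ht.2 hbd⟩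
  have hsub : ∀ u v : ℝ, a ≤ u → u ≤ v → v ≤ b → Set.uIcc u v ⊆ Set.Ioo c d := by
    intro u v h1 h2 h3
    rw [Set.uIcc_of_le h2]
    exact (Set.Icc_subset_Icc h1 h3).trans hIccIoo
  have hba : b - a ≠ 0 := by linarith
  have hn0 : (n : ℝ) ≠ 0 := by positivity
  have hsymk : ∀ k, (P k).eval (a + b - x) = (-1:ℝ)^k * (P k).eval x := by
    intro k
    have h := hsym k (a + b - x) ⟨by linarith, by linarith⟩
    rw [h]
    norm_num
  -- continuity / integrability of the polynomial pieces
  have hcontI : ∀ c₀ : ℝ, ContinuousOn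
      (fun t => (P (n-1)).eval t * (t - c₀) * iteratedDeriv n f t) (Set.Ioo c d) := by
    intro c₀
    exact (((P (n-1)).continuous_aeval.continuousOn.mul
      ((continuous_id.sub continuous_const).continuousOn)).mul (myCont hf le_rfl))
  have hIntP : ∀ (c₀ u v : ℝ), a ≤ u → u ≤ v → v ≤ b →
      IntervalIntegrable (fun t => (P (n-1)).eval t * (t - c₀) * iteratedDeriv n f t)
        volume u v := by
    intro c₀ u v h1 h2 h3
    exact ((hcontI c₀).mono (hsub u v h1 h2 h3)).intervalIntegrable
  -- a.e. equalities on the three pieces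
  have hae1 : ∀ᵐ t ∂(volume : Measure ℝ), t ∈ Ι a x →
      (P (n-1)).eval t * (t - a) * iteratedDeriv n f t
        = (P (n-1)).eval t * Skernel a b x t * iteratedDeriv n f t := by
    apply Filter.Eventually.of_forall
    intro t ht
    rw [Set.uIoc_of_le hax] at ht
    simp only [Skernel, if_pos ht.2]
  have hne : ∀ᵐ t ∂(volume : Measure ℝ), t ≠ a + b - x := by
    refine MeasureTheory.ae_iff.mpr ?_
    simp only [ne_eq, not_not, Set.setOf_eq_eq_singleton, measure_singleton]
  have hae2 : ∀ᵐ t ∂(volume : Measure ℝ), t ∈ Ι x (a + b - x) →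
      (P (n-1)).eval t * (t - (a + b) / 2) * iteratedDeriv n f t
        = (P (n-1)).eval t * Skernel a b x t * iteratedDeriv n f t := by
    filter_upwards [hne] with t htne ht
    rw [Set.uIoc_of_le hxx'] at ht
    have h1 : ¬ t ≤ x := not_le.mpr ht.1
    have h2 : t < a + b - x := lt_of_le_of_ne ht.2 htne
    simp only [Skernel, if_neg h1, if_pos h2]
  have hae3 : ∀ᵐ t ∂(volume : Measure ℝ), t ∈ Ι (a + b - x) b →
      (P (n-1)).eval t * (t - b) * iteratedDeriv n f t
        = (P (n-1)).eval t * Skernel a b x t * iteratedDeriv n f t := by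
    apply Filter.Eventually.of_forall
    intro t ht
    rw [Set.uIoc_of_le hx'b] at ht
    have h1 : ¬ t ≤ x := not_le.mpr (lt_of_le_of_lt hxx' ht.1)
    have h2 : ¬ t < a + b - x := not_lt.mpr (le_of_lt ht.1)
    simp only [Skernel, if_neg h1, if_neg h2]
  -- integrability of the kernel integrand on the pieces
  have hG1 : IntervalIntegrable
      (fun t => (P (n-1)).eval t * Skernel a b x t * iteratedDeriv n f t) volume a x :=
    myIntegrableCongr (hIntP a a x le_rfl hax hxb) hae1
  have hG2 : IntervalIntegrable
      (fun t => (P (n-1)).eval t * Skernel a b x t * iteratedDeriv n f t) volume x (a + b - x) :=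
    myIntegrableCongr (hIntP ((a + b) / 2) x (a + b - x) hax hxx' hx'b) hae2
  have hG3 : IntervalIntegrable
      (fun t => (P (n-1)).eval t * Skernel a b x t * iteratedDeriv n f t) volume (a + b - x) b :=
    myIntegrableCongr (hIntP b (a + b - x) b hax' hx'b le_rfl) hae3
  -- split the kernel integral
  have hsplit : (∫ t in a..b, (P (n-1)).eval t * Skernel a b x t * iteratedDeriv n f t)
      = (∫ t in a..x, (P (n-1)).eval t * Skernel a b x t * iteratedDeriv n f t)
        + (∫ t in x..(a + b - x), (P (n-1)).eval t * Skernel a b x t * iteratedDeriv n f t)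
        + (∫ t in (a + b - x)..b, (P (n-1)).eval t * Skernel a b x t * iteratedDeriv n f t) := by
    rw [intervalIntegral.integral_add_adjacent_intervals hG1 hG2,
      intervalIntegral.integral_add_adjacent_intervals (hG1.trans hG2) hG3]
  -- rewrite each piece with integration by parts
  have hp1 : (∫ t in a..x, (P (n-1)).eval t * Skernel a b x t * iteratedDeriv n f t)
      = (∑ j ∈ Finset.range n, (-1:ℝ)^j * (((P (n-1-j)).eval x * (x - a) + (j:ℝ) * (P (n-j)).eval x) * iteratedDeriv (n-(j+1)) f x - ((P (n-1-j)).eval a * (a - a) + (j:ℝ) * (P (n-j)).eval a) * iteratedDeriv (n-(j+1)) f a))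
        + (-1:ℝ)^n * ((n:ℝ) * ∫ t in a..x, f t) := by
    rw [← intervalIntegral.integral_congr_ae hae1]
    exact myPiece hn hP hf (hsub a x le_rfl hax hxb) a
  have hp2 : (∫ t in x..(a + b - x), (P (n-1)).eval t * Skernel a b x t * iteratedDeriv n f t)
      = (∑ j ∈ Finset.range n, (-1:ℝ)^j * (((P (n-1-j)).eval (a + b - x) * ((a + b - x) - ((a + b) / 2)) + (j:ℝ) * (P (n-j)).eval (a + b - x)) * iteratedDeriv (n-(j+1)) f (a + b - x) - ((P (n-1-j)).eval x * (x - ((a + b) / 2)) + (j:ℝ) * (P (n-j)).eval x) * iteratedDeriv (n-(j+1)) f x))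
        + (-1:ℝ)^n * ((n:ℝ) * ∫ t in x..(a + b - x), f t) := by
    rw [← intervalIntegral.integral_congr_ae hae2]
    exact myPiece hn hP hf (hsub x (a + b - x) hax hxx' hx'b) ((a + b) / 2)
  have hp3 : (∫ t in (a + b - x)..b, (P (n-1)).eval t * Skernel a b x t * iteratedDeriv n f t)
      = (∑ j ∈ Finset.range n, (-1:ℝ)^j * (((P (n-1-j)).eval b * (b - b) + (j:ℝ) * (P (n-j)).eval b) * iteratedDeriv (n-(j+1)) f b - ((P (n-1-j)).eval (a + b - x) * ((a + b - x) - b) + (j:ℝ) * (P (n-j)).eval (a + b - x)) * iteratedDeriv (n-(j+1)) f (a + b - x)))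
        + (-1:ℝ)^n * ((n:ℝ) * ∫ t in (a + b - x)..b, f t) := by
    rw [← intervalIntegral.integral_congr_ae hae3]
    exact myPiece hn hP hf (hsub (a + b - x) b hax' hx'b le_rfl) b
  -- glue the integrals of f
  have hfint : ∀ u v : ℝ, a ≤ u → u ≤ v → v ≤ b → IntervalIntegrable f volume u v := by
    intro u v h1 h2 h3
    exact ((hf.continuousOn).mono (hsub u v h1 h2 h3)).intervalIntegrable
  have hfadd : (∫ t in a..x, f t) + (∫ t in x..(a + b - x), f t) + (∫ t in (a + b - x)..b, f t)
      = ∫ t in a..b, f t := by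
    rw [intervalIntegral.integral_add_adjacent_intervals (hfint a x le_rfl hax hxb)
        (hfint x (a + b - x) hax hxx' hx'b),
      intervalIntegral.integral_add_adjacent_intervals
        ((hfint a x le_rfl hax hxb).trans (hfint x (a + b - x) hax hxx' hx'b))
        (hfint (a + b - x) b hax' hx'b le_rfl)]
  -- combine the three boundary sums
  have hsum1 : (∑ j ∈ Finset.range n, (-1:ℝ)^j * (((P (n-1-j)).eval x * (x - a) + (j:ℝ) * (P (n-j)).eval x) * iteratedDeriv (n-(j+1)) f x - ((P (n-1-j)).eval a * (a - a) + (j:ℝ) * (P (n-j)).eval a) * iteratedDeriv (n-(j+1)) f a)) + (∑ j ∈ Finset.range n, (-1:ℝ)^j * (((P (n-1-j)).eval (a + b - x) * ((a + b - x) - ((a + b) / 2)) + (j:ℝ) * (P (n-j)).eval (a + b - x)) * iteratedDeriv (n-(j+1)) f (a + b - x) - ((P (n-1-j)).eval x * (x - ((a + b) / 2)) + (j:ℝ) * (P (n-j)).eval x) * iteratedDeriv (n-(j+1)) f x)) + (∑ j ∈ Finset.range n, (-1:ℝ)^j * (((P (n-1-j)).eval b * (b - b) + (j:ℝ) * (P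 (n-j)).eval b) * iteratedDeriv (n-(j+1)) f b - ((P (n-1-j)).eval (a + b - x) * ((a + b - x) - b) + (j:ℝ) * (P (n-j)).eval (a + b - x)) * iteratedDeriv (n-(j+1)) f (a + b - x)))
      = ∑ j ∈ Finset.range n, (-1:ℝ)^j * (((b-a)/2) * ((P (n-1-j)).eval x * iteratedDeriv (n-(j+1)) f x + (P (n-1-j)).eval (a + b - x) * iteratedDeriv (n-(j+1)) f (a + b - x)) + (j:ℝ) * ((P (n-j)).eval b * iteratedDeriv (n-(j+1)) f b - (P (n-j)).eval a * iteratedDeriv (n-(j+1)) f a)) := by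
    rw [show (∑ j ∈ Finset.range n, (-1:ℝ)^j * (((b-a)/2) * ((P (n-1-j)).eval x * iteratedDeriv (n-(j+1)) f x + (P (n-1-j)).eval (a + b - x) * iteratedDeriv (n-(j+1)) f (a + b - x)) + (j:ℝ) * ((P (n-j)).eval b * iteratedDeriv (n-(j+1)) f b - (P (n-j)).eval a * iteratedDeriv (n-(j+1)) f a)))
        = ∑ j ∈ Finset.range n, (((-1:ℝ)^j * (((P (n-1-j)).eval x * (x - a) + (j:ℝ) * (P (n-j)).eval x) * iteratedDeriv (n-(j+1)) f x - ((P (n-1-j)).eval a * (a - a) + (j:ℝ) * (P (n-j)).eval a) * iteratedDeriv (n-(j+1)) f a)) + ((-1:ℝ)^j * (((P (n-1-j)).eval (a + b - x) * ((a + b - x) - ((a + b) / 2)) + (j:ℝ) * (P (n-j)).eval (a + b - x)) * iteratedDeriv (n-(j+1)) f (a + b - x) - ((P (n-1-j)).eval x * (x - ((a + b) / 2)) + (j:ℝ) * (P (n-j)).eval x) * iteratedDeriv (n-(j+1)) f x)) + ((-1:ℝ)^j * (((P (n-1-j)).eval b * (b - b) + (j:ℝ) * (P (n-j)).eval b) *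 iteratedDeriv (n-(j+1)) f b - ((P (n-1-j)).eval (a + b - x) * ((a + b - x) - b) + (j:ℝ) * (P (n-j)).eval (a + b - x)) * iteratedDeriv (n-(j+1)) f (a + b - x)))) from
      Finset.sum_congr rfl (fun j hj => by ring)]
    rw [Finset.sum_add_distrib, Finset.sum_add_distrib]
  -- reflect the summation index
  have hsum2 : (∑ j ∈ Finset.range n, (-1:ℝ)^j * (((b-a)/2) * ((P (n-1-j)).eval x * iteratedDeriv (n-(j+1)) f x + (P (n-1-j)).eval (a + b - x) * iteratedDeriv (n-(j+1)) f (a + b - x)) + (j:ℝ) * ((P (n-j)).eval b * iteratedDeriv (n-(j+1)) f b - (P (n-j)).eval a * iteratedDeriv (n-(j+1)) f a)))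
      = ∑ k ∈ Finset.range n, (-1:ℝ)^(n-1) * ((-1:ℝ)^k * ((b-a)/2 * ((P k).eval x * iteratedDeriv k f x + (P k).eval (a + b - x) * iteratedDeriv k f (a + b - x)) + ((n:ℝ)-1-(k:ℝ)) * ((P (k+1)).eval b * iteratedDeriv k f b - (P (k+1)).eval a * iteratedDeriv k f a))) := by
    rw [← Finset.sum_range_reflect]
    apply Finset.sum_congr rfl
    intro k hk
    have hkn : k < n := Finset.mem_range.mp hk
    have e1 : n - 1 - (n-1-k) = k := by omega
    have e2 : n - (n-1-k) = k+1 := by omega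
    have e3 : n - ((n-1-k)+1) = k := by omega
    rw [e1, e2, e3]
    have ecast : ((n-1-k : ℕ) : ℝ) = (n:ℝ) - 1 - (k:ℝ) := by
      have h1 : ((n-1-k:ℕ):ℝ) = ((n-1:ℕ):ℝ) - (k:ℝ) := by
        rw [Nat.cast_sub (by omega)]
      have h2 : ((n-1:ℕ):ℝ) = (n:ℝ) - 1 := by
        rw [Nat.cast_sub hn]; simp
      rw [h1, h2]
    rw [ecast]
    have hsgn : (-1:ℝ)^(n-1) * (-1:ℝ)^k = (-1:ℝ)^(n-1-k) := by
      rw [← pow_add, show (n-1)+k = (n-1-k) + 2*k from by omega, pow_add, pow_mul,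
        neg_one_sq, one_pow, mul_one]
    rw [← hsgn]
    ring
  -- generic reindexing helpers
  have hpeel : ∀ g : ℕ → ℝ, ∑ k ∈ Finset.range n, g k
      = g 0 + ∑ k ∈ Finset.Icc 1 (n-1), g k := by
    intro g
    conv_lhs => rw [show n = (n-1)+1 from by omega]
    rw [Finset.sum_range_succ']
    have h1 : ∑ i ∈ Finset.range (n-1), g (i+1) = ∑ k ∈ Finset.Icc 1 (n-1), g k := by
      rw [show Finset.Icc 1 (n-1) = Finset.Ico 1 ((n-1)+1) from (Finset.Ico_add_one_right_eq_Icc 1 (n-1)).symm,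
        Finset.sum_Ico_eq_sum_range]
      simp only [Nat.add_sub_cancel]
      exact Finset.sum_congr rfl (fun i _ => by rw [Nat.add_comm])
    rw [h1]; ring
  have hshift : ∀ g : ℕ → ℝ, ∑ k ∈ Finset.range n, g (k+1)
      = (∑ k ∈ Finset.Icc 1 (n-1), g k) + g n := by
    intro g
    have h1 : ∑ k ∈ Finset.range n, g (k+1) = ∑ k ∈ Finset.Ico 1 (n+1), g k := by
      rw [Finset.sum_Ico_eq_sum_range]
      simp only [Nat.add_sub_cancel]
      exact Finset.sum_congr rfl (fun i _ => by rw [Nat.add_comm])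
    rw [h1, Finset.Ico_add_one_right_eq_Icc]
    conv_lhs => rw [show n = (n-1)+1 from by omega]
    rw [Finset.sum_Icc_succ_top (by omega)]
    rw [show (n-1)+1 = n from by omega]
  -- the per-term identification
  have hterm : ∀ k, (-1:ℝ)^(n-1) * ((-1:ℝ)^k * ((b-a)/2 * ((P k).eval x * iteratedDeriv k f x + (P k).eval (a + b - x) * iteratedDeriv k f (a + b - x)) + ((n:ℝ)-1-(k:ℝ)) * ((P (k+1)).eval b * iteratedDeriv k f b - (P (k+1)).eval a * iteratedDeriv k f a)))
      = (-1:ℝ)^(n-1) * ((b-a) * ((((-1 : ℝ) ^ k / 2) * (P k).eval x * (iteratedDeriv k f x + (-1 : ℝ) ^ k * iteratedDeriv k f (a + b - x))) + Ftilde P f n a b (k+1))) := by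
    intro k
    congr 1
    rw [hsymk k]
    simp only [Ftilde, Nat.add_sub_cancel]
    push_cast
    field_simp
    ring
  -- assemble the sum
  have hsum3 : (∑ k ∈ Finset.range n, (-1:ℝ)^(n-1) * ((-1:ℝ)^k * ((b-a)/2 * ((P k).eval x * iteratedDeriv k f x + (P k).eval (a + b - x) * iteratedDeriv k f (a + b - x)) + ((n:ℝ)-1-(k:ℝ)) * ((P (k+1)).eval b * iteratedDeriv k f b - (P (k+1)).eval a * iteratedDeriv k f a))))
      = (-1:ℝ)^(n-1) * ((b-a) * ((f x + f (a + b - x)) / 2 + ∑ k ∈ Finset.Icc 1 (n - 1), (((-1 : ℝ) ^ k / 2) * (P k).eval x * (iteratedDeriv k f x + (-1 : ℝ) ^ k * iteratedDeriv k f (a + b - x)) + Ftilde P f n a b k))) := by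
    rw [show (∑ k ∈ Finset.range n, (-1:ℝ)^(n-1) * ((-1:ℝ)^k * ((b-a)/2 * ((P k).eval x * iteratedDeriv k f x + (P k).eval (a + b - x) * iteratedDeriv k f (a + b - x)) + ((n:ℝ)-1-(k:ℝ)) * ((P (k+1)).eval b * iteratedDeriv k f b - (P (k+1)).eval a * iteratedDeriv k f a))))
        = ∑ k ∈ Finset.range n, (-1:ℝ)^(n-1) * ((b-a) * ((((-1 : ℝ) ^ k / 2) * (P k).eval x * (iteratedDeriv k f x + (-1 : ℝ) ^ k * iteratedDeriv k f (a + b - x))) + Ftilde P f n a b (k+1))) from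
      Finset.sum_congr rfl (fun k _ => hterm k)]
    rw [← Finset.mul_sum, ← Finset.mul_sum]
    congr 2
    rw [Finset.sum_add_distrib]
    rw [hpeel (fun k => ((-1 : ℝ) ^ k / 2) * (P k).eval x * (iteratedDeriv k f x + (-1 : ℝ) ^ k * iteratedDeriv k f (a + b - x)))]
    rw [hshift (fun k => Ftilde P f n a b k)]
    have hU0 : ((-1 : ℝ) ^ 0 / 2) * (P 0).eval x
        * (iteratedDeriv 0 f x + (-1 : ℝ) ^ 0 * iteratedDeriv 0 f (a + b - x))
        = (f x + f (a + b - x)) / 2 := by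
      simp [hP.1, iteratedDeriv_zero]
      ring
    have hFn : Ftilde P f n a b n = 0 := by
      simp [Ftilde]
    rw [hFn, hU0, Finset.sum_add_distrib]
    ring
  -- the full identity for the kernel integral
  have hIfinal : (∫ t in a..b, (P (n-1)).eval t * Skernel a b x t * iteratedDeriv n f t)
      = (-1:ℝ)^(n-1) * ((b-a) * ((f x + f (a + b - x)) / 2 + ∑ k ∈ Finset.Icc 1 (n - 1), (((-1 : ℝ) ^ k / 2) * (P k).eval x * (iteratedDeriv k f x + (-1 : ℝ) ^ k * iteratedDeriv k f (a + b - x)) + Ftilde P f n a b k)))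
        + (-1:ℝ)^n * ((n:ℝ) * ∫ t in a..b, f t) := by
    rw [hsplit, hp1, hp2, hp3, ← hsum3, ← hsum2, ← hsum1, ← hfadd]
    ring
  -- final algebra
  have hss : (-1:ℝ)^(n-1) * (-1:ℝ)^(n-1) = 1 := by
    rw [← pow_add, ← two_mul, pow_mul, neg_one_sq, one_pow]
  have hsn : (-1:ℝ)^n = -(-1:ℝ)^(n-1) := by
    conv_lhs => rw [show n = (n-1)+1 from by omega, pow_succ]
    ring
  have hfin : ∀ E F : ℝ, (1/(n:ℝ)) * E - (1/(b-a)) * F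
      = ((-1:ℝ)^(n-1)/((b-a)*(n:ℝ))) * ((-1:ℝ)^(n-1) * ((b-a)*E) + (-1:ℝ)^n * ((n:ℝ) * F)) := by
    intro E F
    rw [hsn]
    rw [show ((-1:ℝ)^(n-1)/((b-a)*(n:ℝ))) * ((-1:ℝ)^(n-1) * ((b-a)*E) + (-(-1:ℝ)^(n-1)) * ((n:ℝ) * F))
        = ((-1:ℝ)^(n-1) * (-1:ℝ)^(n-1)) * (((b-a)*E - (n:ℝ)*F)/((b-a)*(n:ℝ))) from by ring]
    rw [hss, one_mul]
    field_simp
  rw [hIfinal]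
  exact hfin _ _
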